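/- Let G be a cycle graph on n vertices (n ≥ 3) and H also a cycle on n vertices. Then H has a minor-embedding into G with all chains singletons, and conversely, if a graph G on n vertices admits a minor-embedding of the n-cycle Cₙ, then (since chains are nonempty and pairwise disjoint, each chain must be a singleton) G contains a Hamiltonian cycle. -/

import Mathlib

open Finset

/-- A minor-embedding of `H` into `G`: nonempty connected pairwise-disjoint chains,
with every edge of `H` represented by an edge of `G` between the corresponding chains. -/
def IsMinorEmbedding {V W : Type*} (H : SimpleGraph V) (G : SimpleGraph W)
    (φ : V → Finset W) : Prop :=
  (∀ v, (φ v).Nonempty) ∧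
  (∀ v, (G.induce ((φ v : Set W))).Connected) ∧
  (∀ u v, H.Adj u v → ∃ u' ∈ φ u, ∃ v' ∈ φ v, G.Adj u' v') ∧
  (∀ u v : V, u ≠ v → Disjoint (φ u) (φ v))

namespace CycleEmbAux

open SimpleGraph

lemma adj_succ (n : ℕ) (hn : 3 ≤ n) (m : ℕ) (h : m + 1 < n) :
    (cycleGraph n).Adj ⟨m+1, h⟩ ⟨m, Nat.lt_of_succ_lt h⟩ := by
  rw [cycleGraph_adj']
  left
  rw [Fin.sub_def]
  have h1 : n - m + (m + 1) = n + 1 := by omega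
  have h2 : (1:ℕ) < n := by omega
  simp only [h1, Nat.add_mod_left]
  exact Nat.mod_eq_of_lt h2

lemma adj_wrap (n : ℕ) (hn : 3 ≤ n) :
    (cycleGraph n).Adj ⟨0, by omega⟩ ⟨n-1, by omega⟩ := by
  rw [cycleGraph_adj']
  left
  rw [Fin.sub_def]
  have h1 : n - (n - 1) + 0 = 1 := by omega
  have h2 : (1:ℕ) < n := by omega
  simp only [h1]
  exact Nat.mod_eq_of_lt h2

/-- The descending walk `m, m-1, ..., 0` in the cycle graph. -/
def dw (n : ℕ) (hn : 3 ≤ n) : (m : ℕ) → (h : m < n) → (cycleGraph n).Walk ⟨m, h⟩ ⟨0, by omega⟩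
  | 0, _ => Walk.nil
  | (m+1), h => Walk.cons (adj_succ n hn m h) (dw n hn m (Nat.lt_of_succ_lt h))

lemma dw_mem_support (n : ℕ) (hn : 3 ≤ n) (m : ℕ) (h : m < n) (x : Fin n) :
    x ∈ (dw n hn m h).support ↔ x.val ≤ m := by
  induction m with
  | zero =>
    simp only [dw, Walk.support_nil, List.mem_singleton, Nat.le_zero]
    constructor
    · rintro rfl; rfl
    · intro hx; exact Fin.ext hx
  | succ m ih =>
    simp only [dw, Walk.support_cons, List.mem_cons, ih]
    constructor
    · rintro (rfl | hx)
      · rfl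
      · omega
    · intro hx
      rcases Nat.lt_or_ge x.val (m+1) with hlt | hge
      · right; omega
      · left
        apply Fin.ext
        show x.val = m + 1
        omega

lemma dw_support_nodup (n : ℕ) (hn : 3 ≤ n) (m : ℕ) (h : m < n) :
    (dw n hn m h).support.Nodup := by
  induction m with
  | zero => simp [dw]
  | succ m ih =>
    simp only [dw, Walk.support_cons, List.nodup_cons]
    refine ⟨fun hmem => ?_, ih _⟩
    rw [dw_mem_support] at hmem
    simp at hmem

lemma dw_edge_not_mem (n : ℕ) (hn : 3 ≤ n) (m : ℕ) (h : m < n) :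
    s((⟨0, by omega⟩ : Fin n), (⟨n-1, by omega⟩ : Fin n)) ∉ (dw n hn m h).edges := by
  induction m with
  | zero => simp [dw]
  | succ m ih =>
    simp only [dw, Walk.edges_cons, List.mem_cons]
    rintro (heq | hmem)
    · rw [Sym2.eq_iff] at heq
      rcases heq with ⟨h1, h2⟩ | ⟨h1, h2⟩
      · exact absurd (congrArg Fin.val h1) (by simp)
      · have e1 := congrArg Fin.val h1
        have e2 := congrArg Fin.val h2
        simp only at e1 e2
        omega
    · exact ih _ hmem

/-- The Hamiltonian cycle `0, n-1, n-2, ..., 1, 0` in the cycle graph. -/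
def cyc (n : ℕ) (hn : 3 ≤ n) : (cycleGraph n).Walk ⟨0, by omega⟩ ⟨0, by omega⟩ :=
  Walk.cons (adj_wrap n hn) (dw n hn (n-1) (by omega))

lemma cyc_isHamiltonianCycle (n : ℕ) (hn : 3 ≤ n) :
    (cyc n hn).IsHamiltonianCycle := by
  constructor
  · rw [cyc, Walk.cons_isCycle_iff]
    exact ⟨(Walk.isPath_def _).mpr (dw_support_nodup n hn _ _), dw_edge_not_mem n hn _ _⟩
  · intro a
    rw [cyc, Walk.tail_cons]
    erw [Walk.support_copy]
    refine List.count_eq_one_of_mem (dw_support_nodup n hn _ _) ?_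
    rw [dw_mem_support]
    omega

end CycleEmbAux

/-- The `n`-cycle minor-embeds into itself by singleton chains, and conversely a graph `G`
on `n` vertices admitting a minor-embedding of the `n`-cycle contains a Hamiltonian cycle. -/
theorem cycle_embedding_iff_hamiltonian {V : Type*} [Fintype V] [DecidableEq V]
    (n : ℕ) (hn : 3 ≤ n) (G : SimpleGraph V) (hcard : Fintype.card V = n) :
    (IsMinorEmbedding (SimpleGraph.cycleGraph n) (SimpleGraph.cycleGraph n)
      (fun i => {i})) ∧
    ((∃ φ : Fin n → Finset V,
        IsMinorEmbedding (SimpleGraph.cycleGraph n) G φ) →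
      (∀ φ : Fin n → Finset V,
        IsMinorEmbedding (SimpleGraph.cycleGraph n) G φ → ∀ i, (φ i).card = 1) ∧
      ∃ (a : V) (p : G.Walk a a), p.IsHamiltonianCycle) := by
  have key : ∀ φ : Fin n → Finset V,
      IsMinorEmbedding (SimpleGraph.cycleGraph n) G φ → ∀ i, (φ i).card = 1 := by
    intro φ ⟨hne, _, _, hdisj⟩ i
    have hinj : ∀ u v : Fin n, u ≠ v → Disjoint (φ u) (φ v) := hdisj
    have hsum : ∑ j : Fin n, (φ j).card = (Finset.univ.biUnion φ).card :=
      (Finset.card_biUnion (fun u _ v _ huv => hinj u v huv)).symm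
    have hle : (Finset.univ.biUnion φ).card ≤ n := by
      calc (Finset.univ.biUnion φ).card ≤ Fintype.card V := Finset.card_le_univ _
        _ = n := hcard
    have hone : ∀ j : Fin n, 1 ≤ (φ j).card := fun j => Finset.card_pos.mpr (hne j)
    have h1n : ∑ _j : Fin n, 1 = n := by simp
    have hge : n ≤ ∑ j : Fin n, (φ j).card := by
      calc n = ∑ _j : Fin n, 1 := h1n.symm
        _ ≤ ∑ j : Fin n, (φ j).card := Finset.sum_le_sum (fun j _ => hone j)
    have heq : ∑ _j : Fin n, (1:ℕ) = ∑ j : Fin n, (φ j).card := by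
      rw [h1n]; omega
    exact ((Finset.sum_eq_sum_iff_of_le (fun j _ => hone j)).mp heq i (Finset.mem_univ i)).symm
  refine ⟨⟨fun v => Finset.singleton_nonempty v, fun v => ?_, fun u v h => ⟨u, by simp, v, by simp, h⟩,
      fun u v huv => Finset.disjoint_singleton.mpr huv⟩, fun ⟨φ, hφ⟩ => ⟨key, ?_⟩⟩
  · -- singleton induced subgraph is connected
    rw [SimpleGraph.connected_iff]
    refine ⟨fun a b => ?_, ⟨⟨v, by simp⟩⟩⟩
    have ha : (a : Fin n) ∈ ({v} : Finset (Fin n)) := by exact_mod_cast a.prop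
    have hb : (b : Fin n) ∈ ({v} : Finset (Fin n)) := by exact_mod_cast b.prop
    rw [Finset.mem_singleton] at ha hb
    have : a = b := Subtype.ext (ha.trans hb.symm)
    rw [this]
  · -- extract the function and map the Hamiltonian cycle
    obtain ⟨hne, hconn, hadj, hdisj⟩ := hφ
    have hc1 := key φ ⟨hne, hconn, hadj, hdisj⟩
    choose f hf using fun i => Finset.card_eq_one.mp (hc1 i)
    have hmem : ∀ i, f i ∈ φ i := fun i => by rw [hf i]; exact Finset.mem_singleton_self _
    have hfinj : Function.Injective f := by
      intro u v huv
      by_contra hne'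
      have := hdisj u v hne'
      rw [hf u, hf v, huv] at this
      simp at this
    have hfbij : Function.Bijective f := by
      rw [Fintype.bijective_iff_injective_and_card]
      exact ⟨hfinj, by simp [hcard]⟩
    have hfadj : ∀ u v : Fin n, (SimpleGraph.cycleGraph n).Adj u v → G.Adj (f u) (f v) := by
      intro u v h
      obtain ⟨u', hu', v', hv', hGadj⟩ := hadj u v h
      rw [hf u, Finset.mem_singleton] at hu'
      rw [hf v, Finset.mem_singleton] at hv'
      subst hu'
      subst hv'
      exact hGadj
    let F : SimpleGraph.cycleGraph n →g G := ⟨f, fun h => hfadj _ _ h⟩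
    refine ⟨f ⟨0, by omega⟩, (CycleEmbAux.cyc n hn).map F, ?_⟩
    exact SimpleGraph.Walk.IsHamiltonianCycle.map (f := F) hfbij (CycleEmbAux.cyc_isHamiltonianCycle n hn)
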